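/- Let K ⊂ ℝⁿ be a compact convex set and let [x₁, z₁] and [x₂, z₂] be exposed diameters of K that are parallel (i.e., the vectors x₁ − z₁ and x₂ − z₂ are linearly dependent and nonzero). Then [x₁, z₁] = [x₂, z₂] as segments; that is, no two distinct exposed diameters of K are parallel. -/
import Mathlib


open scoped RealInnerProductSpace

/-- The segment `[x, z]` is an *exposed diameter* of `K` provided there exist distinct
parallel hyperplanes `{y : ⟪g, y⟫ = α}` and `{y : ⟪g, y⟫ = β}` (with `g ≠ 0`, `α ≠ β`),
both supporting `K`, which meet `K` exactly in `{x}` and `{z}`, respectively. -/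
def ExposedDiameter {n : ℕ} (K : Set (EuclideanSpace ℝ (Fin n)))
    (x z : EuclideanSpace ℝ (Fin n)) : Prop :=
  ∃ (g : EuclideanSpace ℝ (Fin n)) (α β : ℝ), g ≠ 0 ∧ α ≠ β ∧
    (∀ y ∈ K, β ≤ ⟪g, y⟫ ∧ ⟪g, y⟫ ≤ α) ∧
    {y ∈ K | ⟪g, y⟫ = α} = {x} ∧ {y ∈ K | ⟪g, y⟫ = β} = {z}

/-- Auxiliary: if the direction vectors agree with a *positive* scalar, then both
endpoints coincide. -/
lemma exposedDiameter_aux {n : ℕ} {K : Set (EuclideanSpace ℝ (Fin n))}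
    {x₁ z₁ x₂ z₂ : EuclideanSpace ℝ (Fin n)}
    (h₁ : ExposedDiameter K x₁ z₁) (h₂ : ExposedDiameter K x₂ z₂)
    {c : ℝ} (hc : 0 < c) (hv : x₁ - z₁ = c • (x₂ - z₂)) :
    x₁ = x₂ ∧ z₁ = z₂ := by
  obtain ⟨g₁, α₁, β₁, hg₁, hab₁, hb₁, hX₁, hZ₁⟩ := h₁
  obtain ⟨g₂, α₂, β₂, hg₂, hab₂, hb₂, hX₂, hZ₂⟩ := h₂
  have hx₁ : x₁ ∈ {y ∈ K | ⟪g₁, y⟫ = α₁} := by rw [hX₁]; exact rfl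
  have hz₁ : z₁ ∈ {y ∈ K | ⟪g₁, y⟫ = β₁} := by rw [hZ₁]; exact rfl
  have hx₂ : x₂ ∈ {y ∈ K | ⟪g₂, y⟫ = α₂} := by rw [hX₂]; exact rfl
  have hz₂ : z₂ ∈ {y ∈ K | ⟪g₂, y⟫ = β₂} := by rw [hZ₂]; exact rfl
  obtain ⟨hx₁K, hx₁v⟩ := hx₁
  obtain ⟨hz₁K, hz₁v⟩ := hz₁
  obtain ⟨hx₂K, hx₂v⟩ := hx₂
  obtain ⟨hz₂K, hz₂v⟩ := hz₂
  have hβα₁ : β₁ < α₁ := by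
    have := (hb₁ x₁ hx₁K).1
    rw [hx₁v] at this
    exact lt_of_le_of_ne this hab₁.symm
  have hβα₂ : β₂ < α₂ := by
    have := (hb₂ x₂ hx₂K).1
    rw [hx₂v] at this
    exact lt_of_le_of_ne this hab₂.symm
  have hv' : x₂ - z₂ = c⁻¹ • (x₁ - z₁) := by
    rw [hv, smul_smul, inv_mul_cancel₀ hc.ne', one_smul]
  have e₂ : ⟪g₂, x₁⟫ - ⟪g₂, z₁⟫ = c * (α₂ - β₂) := by
    have h := congrArg (fun v => ⟪g₂, v⟫) hv
    simp only [inner_sub_right, real_inner_smul_right] at h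
    rw [hx₂v, hz₂v] at h
    linarith [h]
  have e₁ : ⟪g₁, x₂⟫ - ⟪g₁, z₂⟫ = c⁻¹ * (α₁ - β₁) := by
    have h := congrArg (fun v => ⟪g₁, v⟫) hv'
    simp only [inner_sub_right, real_inner_smul_right] at h
    rw [hx₁v, hz₁v] at h
    linarith [h]
  have hA : ⟪g₂, x₁⟫ ≤ α₂ := (hb₂ x₁ hx₁K).2
  have hB : β₂ ≤ ⟪g₂, z₁⟫ := (hb₂ z₁ hz₁K).1
  have hA' : ⟪g₁, x₂⟫ ≤ α₁ := (hb₁ x₂ hx₂K).2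
  have hB' : β₁ ≤ ⟪g₁, z₂⟫ := (hb₁ z₂ hz₂K).1
  have hcle : c ≤ 1 := by nlinarith
  have hinv : c⁻¹ ≤ 1 := by nlinarith
  have hc1 : c = 1 := by
    have : (1 : ℝ) ≤ c := by nlinarith [mul_inv_cancel₀ hc.ne']
    linarith
  subst hc1
  have hAeq : ⟪g₂, x₁⟫ = α₂ := by linarith
  have hBeq : ⟪g₂, z₁⟫ = β₂ := by linarith
  constructor
  · have : x₁ ∈ ({x₂} : Set (EuclideanSpace ℝ (Fin n))) := by
      rw [← hX₂]; exact ⟨hx₁K, hAeq⟩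
    exact this
  · have : z₁ ∈ ({z₂} : Set (EuclideanSpace ℝ (Fin n))) := by
      rw [← hZ₂]; exact ⟨hz₁K, hBeq⟩
    exact this

/-- No two distinct exposed diameters of a compact convex set `K ⊆ ℝⁿ` are parallel:
if `[x₁, z₁]` and `[x₂, z₂]` are exposed diameters of `K` whose direction vectors are
nonzero and linearly dependent, then the two segments coincide. -/
theorem exposedDiameter_eq_of_parallel
    (n : ℕ) (K : Set (EuclideanSpace ℝ (Fin n)))
    (hc : IsCompact K) (hcv : Convex ℝ K)
    (x₁ z₁ x₂ z₂ : EuclideanSpace ℝ (Fin n))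
    (h₁ : ExposedDiameter K x₁ z₁) (h₂ : ExposedDiameter K x₂ z₂)
    (hnz₁ : x₁ - z₁ ≠ 0) (hnz₂ : x₂ - z₂ ≠ 0)
    (hdep : ∃ c : ℝ, x₁ - z₁ = c • (x₂ - z₂)) :
    segment ℝ x₁ z₁ = segment ℝ x₂ z₂ := by
  obtain ⟨c, hv⟩ := hdep
  have hc0 : c ≠ 0 := by
    rintro rfl
    simp at hv
    exact hnz₁ hv
  rcases hc0.lt_or_gt with hneg | hpos
  · -- flip the second diameter
    have h₂' : ExposedDiameter K z₂ x₂ := by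
      obtain ⟨g, α, β, hg, hab, hb, hX, hZ⟩ := h₂
      refine ⟨-g, -β, -α, neg_ne_zero.mpr hg, by simpa using hab.symm, ?_, ?_, ?_⟩
      · intro y hy
        have := hb y hy
        simp only [inner_neg_left]
        constructor <;> linarith [this.1, this.2]
      · have : {y ∈ K | ⟪-g, y⟫ = -β} = {y ∈ K | ⟪g, y⟫ = β} := by
          ext y; simp only [Set.mem_setOf_eq, inner_neg_left, neg_inj]
        rw [this, hZ]
      · have : {y ∈ K | ⟪-g, y⟫ = -α} = {y ∈ K | ⟪g, y⟫ = α} := by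
          ext y; simp only [Set.mem_setOf_eq, inner_neg_left, neg_inj]
        rw [this, hX]
    have hv' : x₁ - z₁ = (-c) • (z₂ - x₂) := by
      rw [hv]; rw [neg_smul, ← smul_neg, neg_sub]
    obtain ⟨hx, hz⟩ := exposedDiameter_aux h₁ h₂' (neg_pos.mpr hneg) hv'
    rw [hx, hz, segment_symm]
  · obtain ⟨hx, hz⟩ := exposedDiameter_aux h₁ h₂ hpos hv
    rw [hx, hz]
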